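/- For $t \leq k \leq n/2$, the inclusion matrix $W_{t,k}$ of $t$-subsets versus $k$-subsets of an $n$-set is integrally equivalent to a diagonal matrix with diagonal entries $\binom{k-j}{t-j}$ occurring with multiplicity $\binom{n}{j} - \binom{n}{j-1}$ for $j = 0, 1, \ldots, t$. -/

import Mathlib

/-- Two integer matrices are integrally equivalent if, after identifying the index sets
by bijections (a relabelling, which is a unimodular operation), one is obtained from the
other by multiplying on the left and right by unimodular integer matrices. -/
def IntEquiv {α β γ δ : Type*} [Fintype α] [Fintype β] [Fintype γ] [Fintype δ]
    [DecidableEq γ] [DecidableEq δ]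
    (A : Matrix α β ℤ) (B : Matrix γ δ ℤ) : Prop :=
  ∃ (er : α ≃ γ) (ec : β ≃ δ) (U : Matrix γ γ ℤ) (V : Matrix δ δ ℤ),
    IsUnit U.det ∧ IsUnit V.det ∧ U * (A.submatrix er.symm ec.symm) * V = B

/-- The inclusion matrix `W_{t,k}` over `ℤ`. -/
def inclMatrix (n t k : ℕ) :
    Matrix {s : Finset (Fin n) // s.card = t} {s : Finset (Fin n) // s.card = k} ℤ :=
  fun T K => if T.1 ⊆ K.1 then 1 else 0

/-- Wilson's diagonal form for `W_{t,k}`: the `i`-th diagonal entry is `C(k-j, t-j)` where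
`j` is minimal with `i < C(n,j)`; thus the entry `C(k-j, t-j)` occurs with multiplicity
`C(n,j) - C(n,j-1)` for `j = 0, 1, …, t`, in increasing order of `j`. -/
noncomputable def wilsonDiag (n t k : ℕ) : Matrix (Fin (n.choose t)) (Fin (n.choose k)) ℤ :=
  fun a b =>
    if (a : ℕ) = (b : ℕ) then
      (((k - sInf {j : ℕ | (a : ℕ) < n.choose j}).choose
        (t - sInf {j : ℕ | (a : ℕ) < n.choose j}) : ℕ) : ℤ)
    else 0

open Finset


def BallotSet (B : Finset ℕ) : Prop := ∀ b ∈ B, 2 * (B.filter (· ≤ b)).card ≤ b + 1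
instance : DecidablePred BallotSet := fun B => by unfold BallotSet; infer_instance
abbrev ColIdx (n m : ℕ) := {A : Finset ℕ // A ⊆ range n ∧ A.card = m}
abbrev RowIdx (n m : ℕ) := {B : Finset ℕ // B ⊆ range n ∧ B.card ≤ m ∧ BallotSet B}
instance (n m : ℕ) : Fintype (ColIdx n m) :=
  Fintype.subtype ((range n).powerset.filter fun A => A ⊆ range n ∧ A.card = m) (by
    intro A; simp only [mem_filter, mem_powerset]; tauto)
instance (n m : ℕ) : Fintype (RowIdx n m) :=
  Fintype.subtype ((range n).powerset.filter fun B => B ⊆ range n ∧ B.card ≤ m ∧ BallotSet B) (by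
    intro A; simp only [mem_filter, mem_powerset]; tauto)
def Xmat (n m : ℕ) : Matrix (RowIdx n m) (ColIdx n m) ℤ :=
  fun B M => if B.1 ⊆ M.1 then 1 else 0

def Wmat (n t k : ℕ) : Matrix ({A : Finset ℕ // A ⊆ range n ∧ A.card = t})
    ({A : Finset ℕ // A ⊆ range n ∧ A.card = k}) ℤ :=
  fun T K => if T.1 ⊆ K.1 then 1 else 0

lemma card_colIdx (n m : ℕ) : Fintype.card (ColIdx n m) = n.choose m := by
  have : Fintype.card (ColIdx n m) = ((range n).powersetCard m).card := by
    apply Fintype.card_of_subtype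
    intro A
    simp [mem_powersetCard]
  rw [this, card_powersetCard, card_range]

lemma ballot_subset {B B' : Finset ℕ} (h : B' ⊆ B) (hb : BallotSet B) : BallotSet B' := by
  intro b hb'
  calc 2 * (B'.filter (· ≤ b)).card ≤ 2 * (B.filter (· ≤ b)).card :=
        Nat.mul_le_mul_left 2 (card_le_card (filter_subset_filter _ h))
    _ ≤ b + 1 := hb b (h hb')

lemma ballot_card_le {B : Finset ℕ} {n : ℕ} (hr : B ⊆ range n) (hb : BallotSet B) :
    2 * B.card ≤ n := by
  rcases B.eq_empty_or_nonempty with rfl | hne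
  · simp
  · obtain ⟨b, hbB, hmax⟩ := B.exists_max_image id hne
    have h1 : B.filter (· ≤ b) = B := filter_true_of_mem (fun x hx => hmax x hx)
    have := hb b hbB
    rw [h1] at this
    have hbn : b < n := mem_range.mp (hr hbB)
    omega

lemma ballot_empty : BallotSet ∅ := by intro b hb; simp at hb

lemma ballot_insert {B : Finset ℕ} {n : ℕ} (hr : B ⊆ range n) (hb : BallotSet B)
    (hc : 2 * (B.card + 1) ≤ n + 1) : BallotSet (insert n B) := by
  have hnB : n ∉ B := fun h => absurd (mem_range.mp (hr h)) (lt_irrefl n)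
  intro b hbm
  rcases mem_insert.mp hbm with hbn | hbB
  · subst hbn
    have : (insert b B).filter (· ≤ b) = insert b B := by
      apply filter_true_of_mem
      intro x hx
      rcases mem_insert.mp hx with h | hxB
      · omega
      · exact le_of_lt (mem_range.mp (hr hxB))
    rw [this, card_insert_of_notMem hnB]
    exact hc
  · have hblt : b < n := mem_range.mp (hr hbB)
    have : (insert n B).filter (· ≤ b) = B.filter (· ≤ b) := by
      rw [filter_insert, if_neg (by omega)]
    rw [this]
    exact hb b hbB

def XUni (n m : ℕ) : Prop :=
  ∃ e : RowIdx n m ≃ ColIdx n m, IsUnit ((Xmat n m).submatrix id e).det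

/-- the row split equivalence -/
def rowSplit (n m : ℕ) (h2 : 2 * (m + 1) ≤ n + 1) :
    RowIdx (n+1) (m+1) ≃ (RowIdx n (m+1)) ⊕ (RowIdx n m) where
  toFun B := if hn : n ∈ B.1 then
      Sum.inr ⟨B.1.erase n, by
        intro x hx
        have := B.2.1 (erase_subset _ _ hx)
        simp only [mem_range] at this ⊢
        have : x ≠ n := ne_of_mem_erase hx
        omega,
        by
          have := B.2.2.1
          rw [card_erase_of_mem hn]
          omega,
        ballot_subset (erase_subset _ _) B.2.2.2⟩
    else
      Sum.inl ⟨B.1, by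
        intro x hx
        have := mem_range.mp (B.2.1 hx)
        have : x ≠ n := fun h => hn (h ▸ hx)
        simp only [mem_range]; omega,
        B.2.2.1, B.2.2.2⟩
  invFun := Sum.elim
    (fun B => ⟨B.1, B.2.1.trans (range_subset_range.mpr (Nat.le_succ n)), B.2.2.1, B.2.2.2⟩)
    (fun B => ⟨insert n B.1, by
      intro x hx
      rcases mem_insert.mp hx with h | hxB
      · exact mem_range.mpr (by omega)
      · exact mem_range.mpr ((mem_range.mp (B.2.1 hxB)).trans (Nat.lt_succ_self n)),
      by
        have hnB : n ∉ B.1 := fun h => absurd (mem_range.mp (B.2.1 h)) (lt_irrefl n)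
        rw [card_insert_of_notMem hnB]
        exact Nat.succ_le_succ B.2.2.1,
      ballot_insert B.2.1 B.2.2.2 (by have := B.2.2.1; omega)⟩)
  left_inv B := by
    by_cases hn : n ∈ B.1
    · simp only [dif_pos hn, Sum.elim_inr]
      exact Subtype.ext (insert_erase hn)
    · simp only [dif_neg hn, Sum.elim_inl]
  right_inv s := by
    rcases s with B | B
    · have hnB : n ∉ B.1 := fun h => absurd (mem_range.mp (B.2.1 h)) (lt_irrefl n)
      simp only [Sum.elim_inl, dif_neg hnB]
      exact dif_neg hnB
    · have hnB : n ∉ B.1 := fun h => absurd (mem_range.mp (B.2.1 h)) (lt_irrefl n)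
      simp only [Sum.elim_inr, dif_pos (mem_insert_self n B.1)]
      exact (dif_pos (mem_insert_self n B.1)).trans (congrArg Sum.inr (Subtype.ext (erase_insert hnB)))

def colSplit (n m : ℕ) :
    ColIdx (n+1) (m+1) ≃ (ColIdx n (m+1)) ⊕ (ColIdx n m) where
  toFun M := if hn : n ∈ M.1 then
      Sum.inr ⟨M.1.erase n, by
        intro x hx
        have := mem_range.mp (M.2.1 (erase_subset _ _ hx))
        have : x ≠ n := ne_of_mem_erase hx
        simp only [mem_range]; omega,
        by rw [card_erase_of_mem hn, M.2.2]; omega⟩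
    else
      Sum.inl ⟨M.1, by
        intro x hx
        have := mem_range.mp (M.2.1 hx)
        have : x ≠ n := fun h => hn (h ▸ hx)
        simp only [mem_range]; omega,
        M.2.2⟩
  invFun := Sum.elim
    (fun M => ⟨M.1, M.2.1.trans (range_subset_range.mpr (Nat.le_succ n)), M.2.2⟩)
    (fun M => ⟨insert n M.1, by
      intro x hx
      rcases mem_insert.mp hx with h | hxM
      · exact mem_range.mpr (by omega)
      · exact mem_range.mpr ((mem_range.mp (M.2.1 hxM)).trans (Nat.lt_succ_self n)),
      by
        have hnM : n ∉ M.1 := fun h => absurd (mem_range.mp (M.2.1 h)) (lt_irrefl n)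
        rw [card_insert_of_notMem hnM, M.2.2]⟩)
  left_inv M := by
    by_cases hn : n ∈ M.1
    · simp only [dif_pos hn, Sum.elim_inr]
      exact Subtype.ext (insert_erase hn)
    · simp only [dif_neg hn, Sum.elim_inl]
  right_inv s := by
    rcases s with M | M
    · have hnM : n ∉ M.1 := fun h => absurd (mem_range.mp (M.2.1 h)) (lt_irrefl n)
      simp only [Sum.elim_inl, dif_neg hnM]
      exact dif_neg hnM
    · have hnM : n ∉ M.1 := fun h => absurd (mem_range.mp (M.2.1 h)) (lt_irrefl n)
      simp only [Sum.elim_inr, dif_pos (mem_insert_self n M.1)]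
      exact (dif_pos (mem_insert_self n M.1)).trans (congrArg Sum.inr (Subtype.ext (erase_insert hnM)))

lemma xuni_interior (n m : ℕ) (h2 : 2 * (m + 1) ≤ n + 1)
    (h1 : XUni n (m+1)) (h0 : XUni n m) : XUni (n+1) (m+1) := by
  obtain ⟨e₁, hd1⟩ := h1
  obtain ⟨e₂, hd2⟩ := h0
  set eR := rowSplit n m h2 with heR
  set eS := colSplit n m with heS
  set Q : Matrix (RowIdx n (m+1)) (ColIdx n m) ℤ :=
    fun B M => if B.1 ⊆ M.1 then 1 else 0 with hQ
  set F := Matrix.fromBlocks (Xmat n (m+1)) Q 0 (Xmat n m) with hF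
  have hblock : ((Xmat (n+1) (m+1)).submatrix eR.symm eS.symm) = F := by
    ext i j
    rcases i with i | i <;> rcases j with j | j <;>
      simp only [Matrix.submatrix_apply, hF, Matrix.fromBlocks_apply₁₁,
        Matrix.fromBlocks_apply₁₂, Matrix.fromBlocks_apply₂₁, Matrix.fromBlocks_apply₂₂,
        heR, heS, rowSplit, colSplit, Equiv.coe_fn_symm_mk, Sum.elim_inl, Sum.elim_inr,
        Xmat, hQ, Matrix.zero_apply, Matrix.fromBlocks, Matrix.of_apply]
    · rfl
    · have hni : n ∉ i.1 := fun h => absurd (mem_range.mp (i.2.1 h)) (lt_irrefl n)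
      exact if_congr (subset_insert_iff_of_notMem hni) rfl rfl
    · refine if_neg ?_
      intro hsub
      have := hsub (mem_insert_self n i.1)
      exact absurd (mem_range.mp (j.2.1 this)) (lt_irrefl n)
    · have hni : n ∉ i.1 := fun h => absurd (mem_range.mp (i.2.1 h)) (lt_irrefl n)
      have hiff : insert n i.1 ⊆ insert n j.1 ↔ i.1 ⊆ j.1 := by
        constructor
        · intro h x hx
          rcases mem_insert.mp (h (mem_insert_of_mem hx)) with h' | h'
          · exact absurd (h' ▸ hx) hni
          · exact h'
        · exact insert_subset_insert n
      exact if_congr hiff rfl rfl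
  set sc := Equiv.sumCongr e₁ e₂ with hsc
  have hFsub : F.submatrix id sc
      = Matrix.fromBlocks ((Xmat n (m+1)).submatrix id e₁) (Q.submatrix id e₂)
          0 ((Xmat n m).submatrix id e₂) := by
    ext i j
    rcases i with i | i <;> rcases j with j | j <;>
      simp [hF, hsc, Matrix.submatrix_apply]
  refine ⟨eR.trans (sc.trans eS.symm), ?_⟩
  have hN : (Xmat (n+1) (m+1)).submatrix id (eR.trans (sc.trans eS.symm))
      = (F.submatrix id sc).submatrix eR eR := by
    ext a b
    simp only [Matrix.submatrix_apply, ← hblock, Equiv.symm_apply_apply,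
      Equiv.trans_apply, id_eq]
  rw [hN, Matrix.det_submatrix_equiv_self, hFsub, Matrix.det_fromBlocks_zero₂₁]
  exact hd1.mul hd2

/-- sum over row indices that are subsets of B equals sum over the powerset -/
lemma sum_rowIdx_subsets (n m : ℕ) (B : RowIdx n m) (f : Finset ℕ → ℤ) :
    (∑ B' : RowIdx n m, if B'.1 ⊆ B.1 then f B'.1 else 0) = ∑ S ∈ B.1.powerset, f S := by
  rw [← Finset.sum_filter]
  apply Finset.sum_bij (i := fun (B' : RowIdx n m) _ => B'.1)
  · intro B' hB'
    simp only [mem_filter, mem_univ, true_and] at hB'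
    exact mem_powerset.mpr hB'
  · intro a ha b hb hab
    exact Subtype.ext hab
  · intro S hS
    have hSB := mem_powerset.mp hS
    refine ⟨⟨S, hSB.trans B.2.1, (card_le_card hSB).trans B.2.2.1,
      ballot_subset hSB B.2.2.2⟩, ?_, rfl⟩
    simp only [mem_filter, mem_univ, true_and]
    exact hSB
  · intro B' _; rfl

def Gmat (n m : ℕ) : Matrix (RowIdx n m) (RowIdx n m) ℤ :=
  fun B B' => if B'.1 ⊆ B.1 then (-1)^(B'.1.card) else 0

lemma neg_one_pow_add_two_mul (a b : ℕ) : ((-1 : ℤ))^(a + 2*b) = (-1)^a := by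
  rw [pow_add, pow_mul, neg_one_sq, one_pow, mul_one]

lemma Gmat_invol (n m : ℕ) : Gmat n m * Gmat n m = 1 := by
  ext B B''
  rw [Matrix.mul_apply]
  have hsummand : ∀ B' : RowIdx n m, Gmat n m B B' * Gmat n m B' B''
      = if B'.1 ⊆ B.1 then
          ((-1 : ℤ))^(B'.1.card) * (if B''.1 ⊆ B'.1 then (-1 : ℤ)^(B''.1.card) else 0) else 0 := by
    intro B'
    simp only [Gmat, ite_mul, zero_mul]
  rw [Finset.sum_congr rfl (fun B' _ => hsummand B'),
    sum_rowIdx_subsets n m B (fun S => ((-1 : ℤ))^(S.card) * (if B''.1 ⊆ S then (-1 : ℤ)^(B''.1.card) else 0))]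
  have hsummand2 : ∀ S ∈ B.1.powerset,
      ((-1 : ℤ))^(S.card) * (if B''.1 ⊆ S then (-1 : ℤ)^(B''.1.card) else 0)
      = if B''.1 ⊆ S then ((-1 : ℤ))^(S.card + B''.1.card) else 0 := by
    intro S _
    rw [pow_add]
    split <;> ring
  rw [Finset.sum_congr rfl hsummand2, ← Finset.sum_filter]
  by_cases hss : B''.1 ⊆ B.1
  · have hsum : ∑ S ∈ (B.1.powerset.filter (fun S => B''.1 ⊆ S)),
        ((-1 : ℤ))^(S.card + B''.1.card) = ∑ T ∈ (B.1 \ B''.1).powerset, ((-1 : ℤ))^(T.card) := by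
      apply Finset.sum_bij' (i := fun S _ => S \ B''.1) (j := fun T _ => B''.1 ∪ T)
      · intro S hS
        simp only [mem_filter, mem_powerset] at hS
        exact mem_powerset.mpr (sdiff_subset_sdiff hS.1 (le_refl _))
      · intro T hT
        have hT' := mem_powerset.mp hT
        simp only [mem_filter, mem_powerset]
        exact ⟨union_subset hss (hT'.trans sdiff_subset), subset_union_left⟩
      · intro S hS
        simp only [mem_filter, mem_powerset] at hS
        exact union_sdiff_of_subset hS.2
      · intro T hT
        have hT' := mem_powerset.mp hT
        exact union_sdiff_cancel_left (disjoint_of_subset_right hT' sdiff_disjoint.symm)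
      · intro S hS
        simp only [mem_filter, mem_powerset] at hS
        rw [card_sdiff_of_subset hS.2]
        have h1 : S.card = (S.card - B''.1.card) + B''.1.card := by
          have := card_le_card hS.2; omega
        rw [show S.card + B''.1.card = (S.card - B''.1.card) + 2 * B''.1.card from by omega,
          neg_one_pow_add_two_mul]
    rw [hsum, Finset.sum_powerset_neg_one_pow_card, Matrix.one_apply]
    have : (B.1 \ B''.1 = ∅) ↔ (B = B'') := by
      rw [sdiff_eq_empty_iff_subset]
      constructor
      · intro h; exact Subtype.ext (subset_antisymm h hss)
      · intro h; rw [h]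
    split <;> split <;> first | rfl | (exfalso; tauto)
  · have hempty : (B.1.powerset.filter (fun S => B''.1 ⊆ S)) = ∅ := by
      apply eq_empty_of_forall_notMem
      intro S hS
      simp only [mem_filter, mem_powerset] at hS
      exact hss (hS.2.trans hS.1)
    rw [hempty, Finset.sum_empty, Matrix.one_apply, if_neg]
    intro h
    exact hss (h ▸ le_refl _)

def rowBdry (m : ℕ) : RowIdx (2*m+1) m ≃ RowIdx (2*m+1) (m+1) where
  toFun B := ⟨B.1, B.2.1, B.2.2.1.trans (Nat.le_succ m), B.2.2.2⟩
  invFun B := ⟨B.1, B.2.1, by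
    have := ballot_card_le B.2.1 B.2.2.2; omega, B.2.2.2⟩
  left_inv B := Subtype.ext rfl
  right_inv B := Subtype.ext rfl

def colBdry (m : ℕ) : ColIdx (2*m+1) (m+1) ≃ ColIdx (2*m+1) m where
  toFun M := ⟨range (2*m+1) \ M.1, sdiff_subset, by
    rw [card_sdiff_of_subset M.2.1, card_range, M.2.2]; omega⟩
  invFun M := ⟨range (2*m+1) \ M.1, sdiff_subset, by
    rw [card_sdiff_of_subset M.2.1, card_range, M.2.2]; omega⟩
  left_inv M := Subtype.ext (Finset.sdiff_sdiff_eq_self M.2.1)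
  right_inv M := Subtype.ext (Finset.sdiff_sdiff_eq_self M.2.1)

lemma boundary_ident (m : ℕ) (b : RowIdx (2*m+1) m) (M' : ColIdx (2*m+1) m) :
    Xmat (2*m+1) (m+1) (rowBdry m b) ((colBdry m).symm M')
      = (Gmat (2*m+1) m * Xmat (2*m+1) m) b M' := by
  have hLHS : Xmat (2*m+1) (m+1) (rowBdry m b) ((colBdry m).symm M')
      = if b.1 ∩ M'.1 = ∅ then 1 else 0 := by
    have hiff : b.1 ⊆ (range (2*m+1) \ M'.1) ↔ b.1 ∩ M'.1 = ∅ := by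
      rw [subset_sdiff]
      constructor
      · intro h; exact disjoint_iff_inter_eq_empty.mp h.2
      · intro h; exact ⟨b.2.1, disjoint_iff_inter_eq_empty.mpr h⟩
    simp only [Xmat, rowBdry, colBdry, Equiv.coe_fn_symm_mk]
    exact if_congr hiff rfl rfl
  rw [hLHS, Matrix.mul_apply]
  have hsummand : ∀ B' : RowIdx (2*m+1) m, Gmat (2*m+1) m b B' * Xmat (2*m+1) m B' M'
      = if B'.1 ⊆ b.1 then
          ((-1 : ℤ))^(B'.1.card) * (if B'.1 ⊆ M'.1 then 1 else 0) else 0 := by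
    intro B'
    simp only [Gmat, Xmat, ite_mul, zero_mul]
  rw [Finset.sum_congr rfl (fun B' _ => hsummand B'),
    sum_rowIdx_subsets (2*m+1) m b (fun S => ((-1 : ℤ))^(S.card) * (if S ⊆ M'.1 then 1 else 0))]
  have hsummand2 : ∀ S ∈ b.1.powerset,
      ((-1 : ℤ))^(S.card) * (if S ⊆ M'.1 then (1:ℤ) else 0)
      = if S ⊆ M'.1 then ((-1 : ℤ))^(S.card) else 0 := by
    intro S _; split <;> ring
  rw [Finset.sum_congr rfl hsummand2, ← Finset.sum_filter]
  have hfil : b.1.powerset.filter (fun S => S ⊆ M'.1) = (b.1 ∩ M'.1).powerset := by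
    ext S
    simp only [mem_filter, mem_powerset, subset_inter_iff]
  rw [hfil, Finset.sum_powerset_neg_one_pow_card]

lemma xuni_boundary (m : ℕ) (h : XUni (2*m+1) m) : XUni (2*m+1) (m+1) := by
  obtain ⟨em, hdet⟩ := h
  refine ⟨(rowBdry m).symm.trans (em.trans (colBdry m).symm), ?_⟩
  have hN : (Xmat (2*m+1) (m+1)).submatrix id ((rowBdry m).symm.trans (em.trans (colBdry m).symm))
      = (Gmat (2*m+1) m * ((Xmat (2*m+1) m).submatrix id em)).submatrix
          (rowBdry m).symm (rowBdry m).symm := by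
    ext a bb
    simp only [Matrix.submatrix_apply, Equiv.trans_apply, id_eq]
    have hid := boundary_ident m ((rowBdry m).symm a) (em ((rowBdry m).symm bb))
    rw [Equiv.apply_symm_apply] at hid
    rw [hid]
    rw [Matrix.mul_apply, Matrix.mul_apply]
    apply Finset.sum_congr rfl
    intro B' _
    rw [Matrix.submatrix_apply]
    rfl
  rw [hN, Matrix.det_submatrix_equiv_self, Matrix.det_mul]
  exact (Matrix.isUnit_det_of_left_inverse (Gmat_invol (2*m+1) m)).mul hdet

instance rowIdxZeroUnique (n : ℕ) : Unique (RowIdx n 0) where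
  default := ⟨∅, empty_subset _, le_refl 0, ballot_empty⟩
  uniq := by
    intro a
    apply Subtype.ext
    exact card_eq_zero.mp (Nat.le_antisymm a.2.2.1 (Nat.zero_le _))

instance colIdxZeroUnique (n : ℕ) : Unique (ColIdx n 0) where
  default := ⟨∅, empty_subset _, card_empty⟩
  uniq := by
    intro a
    apply Subtype.ext
    exact card_eq_zero.mp a.2.2

lemma xuni_zero (n : ℕ) : XUni n 0 := by
  refine ⟨Equiv.ofUnique _ _, ?_⟩
  rw [Matrix.det_unique]
  have hd : ((default : RowIdx n 0) : Finset ℕ) = ∅ := rfl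
  simp [Xmat, Matrix.submatrix_apply, hd]

lemma xuni_main : ∀ n m : ℕ, 2 * m ≤ n + 1 → XUni n m := by
  intro n
  induction n with
  | zero =>
    intro m hm
    have : m = 0 := by omega
    subst this
    exact xuni_zero 0
  | succ n IH =>
    intro m hm
    match m with
    | 0 => exact xuni_zero (n+1)
    | (m+1) =>
      by_cases h2 : 2 * (m + 1) ≤ n + 1
      · exact xuni_interior n m h2 (IH (m+1) h2) (IH m (by omega))
      · have hn : n = 2 * m := by omega
        subst hn
        have hmid : XUni (2*m+1) m := by
          match m with
          | 0 => exact xuni_zero 1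
          | (m'+1) =>
            exact xuni_interior (2*(m'+1)) m' (by omega)
              (IH (m'+1) (by omega)) (IH m' (by omega))
        exact xuni_boundary m hmid


/-- number of t-subsets of K containing B -/
lemma card_between {B K : Finset ℕ} (hBK : B ⊆ K) {t : ℕ} (hcard : B.card ≤ t) :
    ((K.powersetCard t).filter (fun T => B ⊆ T)).card
      = (K.card - B.card).choose (t - B.card) := by
  rw [← card_sdiff_of_subset hBK, ← card_powersetCard]
  apply card_bij' (i := fun T _ => T \ B) (j := fun S _ => S ∪ B)
  · intro T hT
    simp only [mem_filter, mem_powersetCard] at hT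
    simp only [mem_powersetCard]
    exact ⟨sdiff_subset_sdiff hT.1.1 (le_refl _), by rw [card_sdiff_of_subset hT.2, hT.1.2]⟩
  · intro S hS
    simp only [mem_powersetCard] at hS
    simp only [mem_filter, mem_powersetCard]
    have hSB : Disjoint S B := disjoint_of_subset_left hS.1 sdiff_disjoint
    refine ⟨⟨union_subset (hS.1.trans sdiff_subset) hBK, ?_⟩, subset_union_right⟩
    rw [card_union_of_disjoint hSB, hS.2]
    omega
  · intro T hT
    simp only [mem_filter, mem_powersetCard] at hT
    exact sdiff_union_of_subset hT.2
  · intro S hS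
    simp only [mem_powersetCard] at hS
    have hSB : Disjoint S B := disjoint_of_subset_left hS.1 sdiff_disjoint
    exact union_sdiff_cancel_right hSB

def rowCast {n t k : ℕ} (htk : t ≤ k) (B : RowIdx n t) : RowIdx n k :=
  ⟨B.1, B.2.1, B.2.2.1.trans htk, B.2.2.2⟩

def Dmat (n t k : ℕ) (htk : t ≤ k) : Matrix (RowIdx n t) (RowIdx n k) ℤ :=
  fun B B' => if B' = rowCast htk B then ((k - B.1.card).choose (t - B.1.card) : ℤ) else 0

lemma key_identity (n t k : ℕ) (htk : t ≤ k) :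
    Xmat n t * Wmat n t k = Dmat n t k htk * Xmat n k := by
  ext B K
  have hRHS : (Dmat n t k htk * Xmat n k) B K
      = (if B.1 ⊆ K.1 then ((k - B.1.card).choose (t - B.1.card) : ℤ) else 0) := by
    rw [Matrix.mul_apply]
    rw [show (∑ B', Dmat n t k htk B B' * Xmat n k B' K)
        = ∑ B', if B' = rowCast htk B then
            ((k - B.1.card).choose (t - B.1.card) : ℤ) * Xmat n k B' K else 0 from by
      apply Finset.sum_congr rfl; intro B' _
      simp only [Dmat, ite_mul, zero_mul]]
    rw [Finset.sum_ite_eq' Finset.univ (rowCast htk B)]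
    simp only [mem_univ, if_true]
    simp only [Xmat, rowCast, mul_ite, mul_one, mul_zero]
    by_cases h : B.1 ⊆ K.1 <;> simp [h]
  rw [hRHS, Matrix.mul_apply]
  have hL : (∑ T, Xmat n t B T * Wmat n t k T K)
      = ((Finset.univ.filter (fun T : ColIdx n t => B.1 ⊆ T.1 ∧ T.1 ⊆ K.1)).card : ℤ) := by
    rw [show (∑ T, Xmat n t B T * Wmat n t k T K)
        = ∑ T : ColIdx n t, if B.1 ⊆ T.1 ∧ T.1 ⊆ K.1 then (1:ℤ) else 0 from by
      apply Finset.sum_congr rfl; intro T _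
      simp only [Xmat, Wmat, ite_and, ite_mul, one_mul, zero_mul]]
    rw [Finset.sum_boole]
  rw [hL]
  have hcards : (Finset.univ.filter (fun T : ColIdx n t => B.1 ⊆ T.1 ∧ T.1 ⊆ K.1)).card
      = ((K.1.powersetCard t).filter (fun T => B.1 ⊆ T)).card := by
    refine card_bij' (fun T _ => T.1) (fun T hT => ⟨T, ?_, ?_⟩) ?_ ?_ ?_ ?_
    · exact ((mem_powersetCard.mp (mem_filter.mp hT).1).1).trans K.2.1
    · exact (mem_powersetCard.mp (mem_filter.mp hT).1).2
    · intro T hT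
      simp only [mem_filter, mem_univ, true_and] at hT
      simp only [mem_filter, mem_powersetCard]
      exact ⟨⟨hT.2, T.2.2⟩, hT.1⟩
    · intro T hT
      simp only [mem_filter, mem_powersetCard] at hT
      simp only [mem_filter, mem_univ, true_and]
      exact ⟨hT.2, hT.1.1⟩
    · intro T _; rfl
    · intro T _; rfl
  rw [hcards]
  by_cases hBK : B.1 ⊆ K.1
  · rw [if_pos hBK, card_between hBK B.2.2.1, K.2.2]
  · rw [if_neg hBK]
    rw [show ((K.1.powersetCard t).filter (fun T => B.1 ⊆ T)) = ∅ from by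
      apply eq_empty_of_forall_notMem
      intro T hT
      simp only [mem_filter, mem_powersetCard] at hT
      exact hBK (hT.2.trans hT.1.1)]
    simp

-- rank machinery
lemma card_rowIdx (n m : ℕ) (h2 : 2 * m ≤ n + 1) :
    Fintype.card (RowIdx n m) = n.choose m := by
  obtain ⟨e, -⟩ := xuni_main n m h2
  rw [Fintype.card_congr e, card_colIdx]

def rkey (B : Finset ℕ) : ℕ ×ₗ ℕ := toLex (B.card, Encodable.encode B)

lemma rkey_inj : Function.Injective rkey := by
  intro a b h
  exact Encodable.encode_injective (congrArg (fun x => (ofLex x).2) h)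

lemma rkey_lt_card {A B : Finset ℕ} (h : rkey A < rkey B) : A.card ≤ B.card := by
  rw [rkey, rkey, Prod.Lex.lt_iff] at h
  rcases h with h | ⟨h, -⟩
  · exact le_of_lt h
  · exact le_of_eq h

lemma rkey_lt_of_card_lt {A B : Finset ℕ} (h : A.card < B.card) : rkey A < rkey B := by
  rw [rkey, rkey, Prod.Lex.lt_iff]
  exact Or.inl h

def rankB (n m : ℕ) (B : Finset ℕ) : ℕ :=
  ((univ : Finset (RowIdx n m)).filter (fun B' => rkey B'.1 < rkey B)).card

lemma rank_lt_rank {n m : ℕ} (B B' : RowIdx n m) (h : rkey B.1 < rkey B'.1) :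
    rankB n m B.1 < rankB n m B'.1 := by
  apply card_lt_card
  rw [Finset.ssubset_iff_of_subset]
  · exact ⟨B, by simp only [mem_filter, mem_univ, true_and]; exact h,
      by simp only [mem_filter, mem_univ, true_and]; exact lt_irrefl _⟩
  · intro x hx
    simp only [mem_filter, mem_univ, true_and] at hx ⊢
    exact hx.trans h

lemma card_level (n m j : ℕ) (hj : j ≤ m) (h2 : 2 * m ≤ n + 1) :
    ((univ : Finset (RowIdx n m)).filter (fun B' => B'.1.card ≤ j)).card = n.choose j := by
  rw [← card_rowIdx n j (by omega), ← Finset.card_univ]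
  refine card_bij' (i := fun (B' : RowIdx n m) hB' =>
      (⟨B'.1, B'.2.1, by simp only [mem_filter] at hB'; exact hB'.2, B'.2.2.2⟩ : RowIdx n j))
    (j := fun (C : RowIdx n j) _ => (⟨C.1, C.2.1, C.2.2.1.trans hj, C.2.2.2⟩ : RowIdx n m))
    ?_ ?_ ?_ ?_
  · intro a ha; exact mem_univ _
  · intro a ha
    simp only [mem_filter, mem_univ, true_and]
    exact a.2.2.1
  · intro a ha; rfl
  · intro a ha; rfl

lemma rank_lt_choose {n m : ℕ} (h2 : 2 * m ≤ n + 1) (B : RowIdx n m) :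
    rankB n m B.1 < n.choose (B.1.card) := by
  have hsub : ((univ : Finset (RowIdx n m)).filter (fun B' => rkey B'.1 < rkey B.1))
      ⊂ ((univ : Finset (RowIdx n m)).filter (fun B' => B'.1.card ≤ B.1.card)) := by
    rw [Finset.ssubset_iff_of_subset]
    · exact ⟨B, by simp, by simp⟩
    · intro x hx
      simp only [mem_filter, mem_univ, true_and] at hx ⊢
      exact rkey_lt_card hx
  have := card_lt_card hsub
  rwa [card_level n m B.1.card B.2.2.1 h2] at this

lemma choose_le_rank {n m : ℕ} (h2 : 2 * m ≤ n + 1) (B : RowIdx n m) {j' : ℕ}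
    (hj' : j' < B.1.card) : n.choose j' ≤ rankB n m B.1 := by
  rw [← card_level n m j' (le_trans (le_of_lt hj') B.2.2.1) h2]
  apply card_le_card
  intro x hx
  simp only [mem_filter, mem_univ, true_and] at hx ⊢
  exact rkey_lt_of_card_lt (by omega)

lemma sInf_rank {n m : ℕ} (h2 : 2 * m ≤ n + 1) (B : RowIdx n m) :
    sInf {j : ℕ | rankB n m B.1 < n.choose j} = B.1.card := by
  have hmem : B.1.card ∈ {j : ℕ | rankB n m B.1 < n.choose j} := rank_lt_choose h2 B
  apply le_antisymm
  · exact Nat.sInf_le hmem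
  · apply le_csInf ⟨B.1.card, hmem⟩
    intro j' hj'
    by_contra hlt
    push_neg at hlt
    exact absurd hj' (not_lt.mpr (choose_le_rank h2 B hlt))

lemma choose_le_half {n j m : ℕ} (hj : j ≤ m) (h2 : 2 * m ≤ n + 1) :
    n.choose j ≤ n.choose m := by
  induction m with
  | zero =>
    have : j = 0 := Nat.le_zero.mp hj
    simp [this]
  | succ m IH =>
    rcases Nat.lt_or_ge j (m+1) with hlt | hge
    · have h1 : n.choose j ≤ n.choose m := IH (by omega) (by omega)
      refine h1.trans ?_
      rcases Nat.lt_or_ge m (n / 2) with hm | hm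
      · exact Nat.choose_le_succ_of_lt_half_left hm
      · have hn : n = 2 * m + 1 := by omega
        subst hn
        have : (2*m+1).choose ((2*m+1) - (m+1)) = (2*m+1).choose (m+1) :=
          Nat.choose_symm (by omega)
        rw [show (2*m+1) - (m+1) = m from by omega] at this
        exact le_of_eq this
    · have : j = m + 1 := by omega
      simp [this]

noncomputable def rowFinEquiv (n m : ℕ) (h2 : 2 * m ≤ n + 1) : RowIdx n m ≃ Fin (n.choose m) :=
  Equiv.ofBijective
    (fun B => ⟨rankB n m B.1, by
      have := rank_lt_choose h2 B
      calc rankB n m B.1 < n.choose B.1.card := this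
        _ ≤ n.choose m := choose_le_half B.2.2.1 h2⟩)
    (by
      rw [Fintype.bijective_iff_injective_and_card]
      constructor
      · intro B B' h
        have h2' : rankB n m B.1 = rankB n m B'.1 := congrArg Fin.val h
        by_contra hne
        have hkey : rkey B.1 ≠ rkey B'.1 := fun hk =>
          hne (Subtype.ext (rkey_inj hk))
        rcases lt_or_gt_of_ne hkey with hlt | hlt
        · exact absurd h2' (ne_of_lt (rank_lt_rank B B' hlt))
        · exact absurd h2'.symm (ne_of_lt (rank_lt_rank B' B hlt))
      · rw [Fintype.card_fin]
        exact card_rowIdx n m h2)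

lemma rank_cast {n t k : ℕ} (htk : t ≤ k) (B : RowIdx n t) :
    rankB n k B.1 = rankB n t B.1 := by
  refine card_bij' (i := fun (B' : RowIdx n k) hB' =>
      (⟨B'.1, B'.2.1, by
        simp only [rankB, mem_filter, mem_univ, true_and] at hB'
        exact (rkey_lt_card hB').trans B.2.2.1, B'.2.2.2⟩ : RowIdx n t))
    (j := fun (C : RowIdx n t) _ => rowCast htk C) ?_ ?_ ?_ ?_
  · intro a ha
    simp only [mem_filter, mem_univ, true_and] at ha ⊢
    exact ha
  · intro a ha
    simp only [mem_filter, mem_univ, true_and] at ha ⊢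
    exact ha
  · intro a ha; rfl
  · intro a ha; rfl

lemma attachFin_subset_iff {s u : Finset ℕ} {n : ℕ}
    (hs : ∀ x ∈ s, x < n) (hu : ∀ x ∈ u, x < n) :
    s.attachFin hs ⊆ u.attachFin hu ↔ s ⊆ u := by
  constructor
  · intro h x hxs
    exact (mem_attachFin _).mp (h ((mem_attachFin _).mpr hxs : (⟨x, hs x hxs⟩ : Fin n) ∈ _))
  · intro h y hy
    exact (mem_attachFin _).mpr (h ((mem_attachFin _).mp hy))

def finsetEquiv (n m : ℕ) : {s : Finset (Fin n) // s.card = m} ≃ ColIdx n m where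
  toFun s := ⟨s.1.map Fin.valEmbedding, by
    intro x hx
    rw [mem_map] at hx
    obtain ⟨y, -, rfl⟩ := hx
    exact mem_range.mpr y.2, by rw [card_map, s.2]⟩
  invFun A := ⟨A.1.attachFin (fun x hx => mem_range.mp (A.2.1 hx)), by
    rw [card_attachFin, A.2.2]⟩
  left_inv s := by
    apply Subtype.ext
    ext a
    simp only [mem_attachFin, mem_map, Fin.valEmbedding_apply]
    constructor
    · rintro ⟨b, hb, hba⟩
      rwa [← Fin.val_injective hba]
    · intro ha; exact ⟨a, ha, rfl⟩
  right_inv A := by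
    apply Subtype.ext
    ext x
    simp only [mem_map, Fin.valEmbedding_apply]
    constructor
    · rintro ⟨y, hy, rfl⟩
      exact (mem_attachFin _).mp hy
    · intro hx
      exact ⟨⟨x, mem_range.mp (A.2.1 hx)⟩, (mem_attachFin _).mpr hx, rfl⟩

lemma finsetEquiv_symm_subset_iff {n t k : ℕ} (A : ColIdx n t) (K : ColIdx n k) :
    ((finsetEquiv n t).symm A).1 ⊆ ((finsetEquiv n k).symm K).1 ↔ A.1 ⊆ K.1 :=
  attachFin_subset_iff _ _


theorem stmt9 (n t k : ℕ) (htk : t ≤ k) (hk : 2 * k ≤ n) :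
    IntEquiv (inclMatrix n t k) (wilsonDiag n t k) := by
  classical
  have h2t : 2 * t ≤ n + 1 := by omega
  have h2k : 2 * k ≤ n + 1 := by omega
  obtain ⟨et, hdt⟩ := xuni_main n t h2t
  obtain ⟨ek, hdk⟩ := xuni_main n k h2k
  set Ft := rowFinEquiv n t h2t with hFt
  set Fk := rowFinEquiv n k h2k with hFk
  set Ut := (Xmat n t).submatrix id ⇑et with hUt
  set Vk := (Xmat n k).submatrix id ⇑ek with hVk
  set U : Matrix (Fin (n.choose t)) (Fin (n.choose t)) ℤ := Ut.submatrix ⇑Ft.symm ⇑Ft.symm with hU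
  set V' : Matrix (Fin (n.choose k)) (Fin (n.choose k)) ℤ := Vk.submatrix ⇑Fk.symm ⇑Fk.symm with hV'
  have hdU : IsUnit U.det := by
    rw [hU, Matrix.det_submatrix_equiv_self Ft.symm Ut]; exact hdt
  have hdV' : IsUnit V'.det := by
    rw [hV', Matrix.det_submatrix_equiv_self Fk.symm Vk]; exact hdk
  refine ⟨(finsetEquiv n t).trans (et.symm.trans Ft), (finsetEquiv n k).trans (ek.symm.trans Fk),
    U, V'⁻¹, hdU,
    Matrix.isUnit_det_of_left_inverse (Matrix.mul_nonsing_inv V' hdV'), ?_⟩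
  have hW : (inclMatrix n t k).submatrix
        ((finsetEquiv n t).trans (et.symm.trans Ft)).symm
        ((finsetEquiv n k).trans (ek.symm.trans Fk)).symm
      = ((Wmat n t k).submatrix ⇑et ⇑ek).submatrix ⇑Ft.symm ⇑Fk.symm := by
    ext a b
    simp only [Matrix.submatrix_apply, Equiv.symm_trans_apply, Equiv.symm_symm, inclMatrix, Wmat]
    exact if_congr (finsetEquiv_symm_subset_iff _ _) rfl rfl
  rw [hW]
  have hkey : Ut * ((Wmat n t k).submatrix ⇑et ⇑ek) = Dmat n t k htk * Vk := by
    rw [hUt, Matrix.submatrix_mul_equiv (Xmat n t) (Wmat n t k) id et ⇑ek,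
      key_identity n t k htk, hVk]
    have := Matrix.submatrix_mul_equiv (Dmat n t k htk) (Xmat n k) id (Equiv.refl _) ⇑ek
    simp only [Equiv.coe_refl, Matrix.submatrix_id_id] at this
    exact this.symm
  have hstep : U * (((Wmat n t k).submatrix ⇑et ⇑ek).submatrix ⇑Ft.symm ⇑Fk.symm)
      = ((Dmat n t k htk).submatrix ⇑Ft.symm ⇑Fk.symm) * V' := by
    rw [hU, Matrix.submatrix_mul_equiv Ut ((Wmat n t k).submatrix ⇑et ⇑ek) ⇑Ft.symm Ft.symm ⇑Fk.symm,
      hkey, hV']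
    exact (Matrix.submatrix_mul_equiv (Dmat n t k htk) Vk ⇑Ft.symm Fk.symm ⇑Fk.symm).symm
  rw [hstep, Matrix.mul_nonsing_inv_cancel_right _ _ hdV']
  -- finally: the diagonal matrix matches wilsonDiag
  ext a b
  simp only [Matrix.submatrix_apply, Dmat, wilsonDiag]
  have hva : (a : ℕ) = rankB n t ((Ft.symm a) : RowIdx n t).1 := by
    conv_lhs => rw [← Equiv.apply_symm_apply Ft a]
    rfl
  have hvb : (b : ℕ) = rankB n k ((Fk.symm b) : RowIdx n k).1 := by
    conv_lhs => rw [← Equiv.apply_symm_apply Fk b]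
    rfl
  have hcond : (Fk.symm b = rowCast htk (Ft.symm a)) ↔ ((a : ℕ) = (b : ℕ)) := by
    constructor
    · intro h
      rw [hva, hvb, h]
      exact (rank_cast htk (Ft.symm a)).symm
    · intro h
      have hval : ((Fk (rowCast htk (Ft.symm a))) : ℕ) = (b : ℕ) := by
        have h1 : ((Fk (rowCast htk (Ft.symm a))) : ℕ)
            = rankB n k (rowCast htk (Ft.symm a)).1 := rfl
        rw [h1, show (rowCast htk (Ft.symm a)).1 = ((Ft.symm a) : RowIdx n t).1 from rfl,
          rank_cast htk (Ft.symm a), ← hva, h]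
      have hFkb : Fk (rowCast htk (Ft.symm a)) = b := Fin.ext hval
      rw [← hFkb, Equiv.symm_apply_apply]
  by_cases hc : (a : ℕ) = (b : ℕ)
  · rw [if_pos (hcond.mpr hc), if_pos hc]
    have hs : sInf {j : ℕ | (a : ℕ) < n.choose j} = ((Ft.symm a) : RowIdx n t).1.card := by
      rw [hva]
      exact sInf_rank h2t (Ft.symm a)
    rw [hs]
  · rw [if_neg (fun h => hc (hcond.mp h)), if_neg hc]
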